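/- Let n be a natural number, (t, e) a permissible pair of elements of T_n, and g : Equiv.Perm (Fin n) a permutation. Then: (i) for every s ∈ T_n, φ_{t,e}(g ∘ s ∘ g⁻¹) = φ_{t,e}(s); and (ii) the pair (g ∘ t ∘ g⁻¹, g ∘ e ∘ g⁻¹) is permissible and for every s ∈ T_n one has g ∘ φ_{t,e}(s) ∘ g⁻¹ = φ_{g∘t∘g⁻¹, g∘e∘g⁻¹}(s). -/

import Mathlib

/-- `s : Fin n → Fin n` is an odd permutation if it is the underlying function of some
permutation of sign `-1`. -/
def IsOddPerm {n : ℕ} (s : Fin n → Fin n) : Prop :=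
  ∃ σ : Equiv.Perm (Fin n), Equiv.Perm.sign σ = -1 ∧ ⇑σ = s

/-- `s : Fin n → Fin n` is an even permutation if it is the underlying function of some
permutation of sign `1`. -/
def IsEvenPerm {n : ℕ} (s : Fin n → Fin n) : Prop :=
  ∃ σ : Equiv.Perm (Fin n), Equiv.Perm.sign σ = 1 ∧ ⇑σ = s

/-- A pair `(t, e)` of elements of `T_n` is permissible if `t ∘ t ∘ t = t` and
`t ∘ e = e ∘ t = e ∘ e = e`. -/
def Permissible {n : ℕ} (t e : Fin n → Fin n) : Prop :=
  t ∘ t ∘ t = t ∧ t ∘ e = e ∧ e ∘ t = e ∧ e ∘ e = e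

open Classical in
/-- For a (permissible) pair `(t, e)`, the map `φ_{t,e} : T_n → T_n` sending `s` to `t` if `s`
is an odd permutation, to `t ∘ t` if `s` is an even permutation, and to `e` if `s` is not
bijective. -/
noncomputable def phi {n : ℕ} (t e : Fin n → Fin n) : (Fin n → Fin n) → (Fin n → Fin n) :=
  fun s => if IsOddPerm s then t else if IsEvenPerm s then t ∘ t else e

/-- `φ : T_n → T_n` is a semigroup endomorphism of `T_n` if `φ (s ∘ s') = φ s ∘ φ s'`
for all `s, s'`. -/
def IsEndo {n : ℕ} (φ : (Fin n → Fin n) → (Fin n → Fin n)) : Prop :=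
  ∀ s s' : Fin n → Fin n, φ (s ∘ s') = φ s ∘ φ s'

/-- For a permissible pair `(t, e)` and a permutation `g`:
(i) `φ_{t,e} (g ∘ s ∘ g⁻¹) = φ_{t,e} s` for all `s`; and
(ii) the pair `(g ∘ t ∘ g⁻¹, g ∘ e ∘ g⁻¹)` is permissible and
`g ∘ φ_{t,e} s ∘ g⁻¹ = φ_{g∘t∘g⁻¹, g∘e∘g⁻¹} s` for all `s`. -/
lemma conj_coe {n : ℕ} (g σ : Equiv.Perm (Fin n)) :
    ⇑(g * σ * g⁻¹) = ⇑g ∘ ⇑σ ∘ ⇑g⁻¹ := by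
  ext x; simp

lemma ginv_comp {n : ℕ} (g : Equiv.Perm (Fin n)) : ⇑g⁻¹ ∘ ⇑g = id := by
  ext x; simp

lemma comp_ginv {n : ℕ} (g : Equiv.Perm (Fin n)) : ⇑g ∘ ⇑g⁻¹ = id := by
  ext x; simp

lemma odd_conj {n : ℕ} (g : Equiv.Perm (Fin n)) (s : Fin n → Fin n) :
    IsOddPerm (⇑g ∘ s ∘ ⇑g⁻¹) ↔ IsOddPerm s := by
  constructor
  · rintro ⟨σ, hsgn, hσ⟩
    refine ⟨g⁻¹ * σ * g, by simp [hsgn], ?_⟩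
    rw [show (g : Equiv.Perm (Fin n))⁻¹ * σ * g = g⁻¹ * σ * (g⁻¹)⁻¹ by simp,
      conj_coe, hσ]
    calc ⇑g⁻¹ ∘ (⇑g ∘ s ∘ ⇑g⁻¹) ∘ ⇑g = (⇑g⁻¹ ∘ ⇑g) ∘ s ∘ (⇑g⁻¹ ∘ ⇑g) := by
          rfl
      _ = s := by rw [ginv_comp]; rfl
  · rintro ⟨σ, hsgn, hσ⟩
    exact ⟨g * σ * g⁻¹, by simp [hsgn], by rw [conj_coe, hσ]⟩

lemma even_conj {n : ℕ} (g : Equiv.Perm (Fin n)) (s : Fin n → Fin n) :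
    IsEvenPerm (⇑g ∘ s ∘ ⇑g⁻¹) ↔ IsEvenPerm s := by
  constructor
  · rintro ⟨σ, hsgn, hσ⟩
    refine ⟨g⁻¹ * σ * g, by simp [hsgn], ?_⟩
    rw [show (g : Equiv.Perm (Fin n))⁻¹ * σ * g = g⁻¹ * σ * (g⁻¹)⁻¹ by simp,
      conj_coe, hσ]
    calc ⇑g⁻¹ ∘ (⇑g ∘ s ∘ ⇑g⁻¹) ∘ ⇑g = (⇑g⁻¹ ∘ ⇑g) ∘ s ∘ (⇑g⁻¹ ∘ ⇑g) := by
          rfl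
      _ = s := by rw [ginv_comp]; rfl
  · rintro ⟨σ, hsgn, hσ⟩
    exact ⟨g * σ * g⁻¹, by simp [hsgn], by rw [conj_coe, hσ]⟩

lemma conj_comp {n : ℕ} (g : Equiv.Perm (Fin n)) (a b : Fin n → Fin n) :
    (⇑g ∘ a ∘ ⇑g⁻¹) ∘ (⇑g ∘ b ∘ ⇑g⁻¹) = ⇑g ∘ (a ∘ b) ∘ ⇑g⁻¹ := by
  calc (⇑g ∘ a ∘ ⇑g⁻¹) ∘ (⇑g ∘ b ∘ ⇑g⁻¹)
      = ⇑g ∘ a ∘ (⇑g⁻¹ ∘ ⇑g) ∘ b ∘ ⇑g⁻¹ := by rfl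
    _ = ⇑g ∘ (a ∘ b) ∘ ⇑g⁻¹ := by rw [ginv_comp]; simp [Function.comp_assoc]

theorem phi_conjugation (n : ℕ) (t e : Fin n → Fin n) (h : Permissible t e)
    (g : Equiv.Perm (Fin n)) :
    (∀ s : Fin n → Fin n, phi t e (⇑g ∘ s ∘ ⇑g⁻¹) = phi t e s) ∧
      (Permissible (⇑g ∘ t ∘ ⇑g⁻¹) (⇑g ∘ e ∘ ⇑g⁻¹) ∧
        ∀ s : Fin n → Fin n,
          ⇑g ∘ phi t e s ∘ ⇑g⁻¹ = phi (⇑g ∘ t ∘ ⇑g⁻¹) (⇑g ∘ e ∘ ⇑g⁻¹) s) := by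
  obtain ⟨h1, h2, h3, h4⟩ := h
  refine ⟨?_, ⟨?_, ?_, ?_, ?_⟩, ?_⟩
  · intro s
    unfold phi
    rw [iff_iff_eq.mp (odd_conj g s), iff_iff_eq.mp (even_conj g s)]
  · rw [conj_comp, conj_comp, h1]
  · rw [conj_comp, h2]
  · rw [conj_comp, h3]
  · rw [conj_comp, h4]
  · intro s
    simp only [phi]
    split_ifs with h5 h6
    · rfl
    · rw [conj_comp]
    · rfl
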